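/- Soundness of SDKH: for every formula φ of DKH, if φ is provable in the proof system SDKH then φ is valid, i.e., M,s ⊨ φ for every model M and every state s of M. -/

import Mathlib

namespace DKH

/-- Groups of agents: subsets of the finite agent set `I = {i_0, …, i_{n-1}}`. -/
abbrev Grp (n : ℕ) := Finset (Fin n)

/-- The language DKH: φ ::= ⊤ | p | ¬φ | (φ∧φ) | K_G φ | Kh_G φ. -/
inductive Formula (P : Type) (n : ℕ) : Type
  | top  : Formula P n
  | atom : P → Formula P n
  | neg  : Formula P n → Formula P n
  | and  : Formula P n → Formula P n → Formula P n
  | K    : Grp n → Formula P n → Formula P n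
  | Kh   : Grp n → Formula P n → Formula P n

instance {P n} : Inhabited (Formula P n) := ⟨.top⟩

namespace Formula
/-- Defined implication φ → ψ := ¬(φ ∧ ¬ψ). -/
def imp {P n} (φ ψ : Formula P n) : Formula P n := .neg (φ.and ψ.neg)
/-- Defined falsum ⊥ := ¬⊤. -/
def bot {P : Type} {n : ℕ} : Formula P n := .neg .top
end Formula

/-- A model ⟨S, {∼_i}, {A_G}, {→_a}, V⟩. -/
structure KhModel (P : Type) (n : ℕ) where
  State : Type
  Act : Type
  sim : Fin n → State → State → Prop
  sim_equiv : ∀ i, Equivalence (sim i)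
  A : Grp n → Set Act
  A_empty : A ∅ = ∅
  A_disj : ∀ G H : Grp n, G ⊂ H → A G ∩ A H = ∅
  tr : Act → State → State → Prop
  V : P → Set State

/-- Distributed indistinguishability: s ∼_G t iff s ∼_i t for every i ∈ G. -/
def gsim {P n} (M : KhModel P n) (G : Grp n) (s t : M.State) : Prop :=
  ∀ i ∈ G, M.sim i s t

/-- Distributed actions: atomic group actions, or joint tuples ⟨d_0,…,d_k⟩. -/
inductive DAct (Act : Type) : Type
  | atom : Act → DAct Act
  | joint : List (DAct Act) → DAct Act

mutual
/-- Distributed transition relation: →_{⟨d_0,…,d_k⟩} = ⋂_j →_{d_j}. -/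
def dtr {Act State : Type} (tr : Act → State → State → Prop) :
    DAct Act → State → State → Prop
  | .atom a, s, t => tr a s t
  | .joint ds, s, t => dtrList tr ds s t

def dtrList {Act State : Type} (tr : Act → State → State → Prop) :
    List (DAct Act) → State → State → Prop
  | [], _, _ => True
  | d :: ds, s, t => dtr tr d s t ∧ dtrList tr ds s t
end

/-- `Gs` is a partial partition of `G`: a family of nonempty, pairwise disjoint
blocks, all included in `G` (i.e. a partition of a subset of `G`). -/
def PartialPartition {n : ℕ} (G : Grp n) (Gs : List (Grp n)) : Prop :=
  (∀ B ∈ Gs, B ≠ ∅) ∧ Gs.Pairwise (fun B C => Disjoint B C) ∧ (∀ B ∈ Gs, B ⊆ G)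

/-- The fixed ordering on mutually disjoint nonempty groups: G ≺ H iff the
minimal index of an agent in G is below that of H. -/
def grpLt {n : ℕ} (B C : Grp n) : Prop := B.min < C.min

/-- Membership in the set A*_G of distributed actions of group G:
the closure of A^+_G = ⋃_{G'⊆G} A_{G'} under forming joint actions
⟨d_0,…,d_k⟩ ∈ A*_{G_0} × ⋯ × A*_{G_k} for non-trivial partial partitions
{G_0,…,G_k} of G listed in the fixed order ≺. -/
inductive star {n : ℕ} {Act : Type} (A : Grp n → Set Act) : Grp n → DAct Act → Prop
  | base {G G' : Grp n} {a : Act} :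
      G' ⊆ G → a ∈ A G' → star A G (.atom a)
  | joint {G : Grp n} {Gs : List (Grp n)} {ds : List (DAct Act)} :
      2 ≤ Gs.length → PartialPartition G Gs → Gs.Chain' grpLt →
      List.Forall₂ (star A) Gs ds → star A G (.joint ds)

/-- Membership in A^+_G = ⋃_{G'⊆G} A_{G'} (as a set of distributed actions). -/
def inAplus {n : ℕ} {Act : Type} (A : Grp n → Set Act) (G : Grp n) (d : DAct Act) : Prop :=
  ∃ G' : Grp n, G' ⊆ G ∧ ∃ a ∈ A G', d = .atom a

/-- d is executable on X if every s ∈ X has a d-successor. -/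
def ExecutableOn {P n} (M : KhModel P n) (d : DAct M.Act) (X : Set M.State) : Prop :=
  ∀ s ∈ X, ∃ t, dtr M.tr d s t

/-- A strategy of group G: a partial function from ∼_G-equivalence classes to
A*_G such that the prescribed action is executable on the class. -/
structure Strategy {P n} (M : KhModel P n) (G : Grp n) where
  act : M.State → Option (DAct M.Act)
  uniform : ∀ s t, gsim M G s t → act s = act t
  mem_star : ∀ s d, act s = some d → star M.A G d
  exec : ∀ s d, act s = some d → ∀ t, gsim M G s t → ∃ u, dtr M.tr d t u

/-- One step of an execution: [s]_G →_{σ([s]_G)} [t]_G. -/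
def stepRel {P n} {M : KhModel P n} {G : Grp n} (σ : Strategy M G) (s t : M.State) : Prop :=
  ∃ d, σ.act s = some d ∧ ∃ u v, gsim M G s u ∧ gsim M G t v ∧ dtr M.tr d u v

/-- Leaf-nodes of the finite complete executions of σ starting from [s]_G,
as a ∼_G-closed set of states. -/
def CELeaf {P n} {M : KhModel P n} {G : Grp n} (σ : Strategy M G) (s : M.State) :
    Set M.State :=
  {t | ∃ (m : ℕ) (f : ℕ → M.State), gsim M G s (f 0) ∧
    (∀ j < m, stepRel σ (f j) (f (j+1))) ∧ σ.act (f m) = none ∧ gsim M G (f m) t}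

/-- There is an infinite (hence complete) execution of σ starting from [s]_G. -/
def InfiniteFrom {P n} {M : KhModel P n} {G : Grp n} (σ : Strategy M G) (s : M.State) : Prop :=
  ∃ f : ℕ → M.State, gsim M G s (f 0) ∧ ∀ j, stepRel σ (f j) (f (j+1))

/-- Inner-nodes of the complete executions of σ starting from [s]_G,
as a ∼_G-closed set of states. -/
def CEInner {P n} {M : KhModel P n} {G : Grp n} (σ : Strategy M G) (s : M.State) :
    Set M.State :=
  {t | (∃ (m : ℕ) (f : ℕ → M.State), gsim M G s (f 0) ∧
          (∀ j < m, stepRel σ (f j) (f (j+1))) ∧ σ.act (f m) = none ∧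
          ∃ j < m, gsim M G (f j) t) ∨
       (∃ f : ℕ → M.State, gsim M G s (f 0) ∧
          (∀ j, stepRel σ (f j) (f (j+1))) ∧ ∃ j, gsim M G (f j) t)}

/-- Truth at a pointed model. -/
def Sat {P n} (M : KhModel P n) : M.State → Formula P n → Prop
  | _, .top => True
  | s, .atom p => s ∈ M.V p
  | s, .neg φ => ¬ Sat M s φ
  | s, .and φ ψ => Sat M s φ ∧ Sat M s ψ
  | s, .K G φ => ∀ t, gsim M G s t → Sat M t φ
  | s, .Kh G φ => ∃ σ : Strategy M G,
      (∀ t ∈ CELeaf σ s, Sat M t φ) ∧ ¬ InfiniteFrom σ s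

/-- Boolean evaluation treating ⊤, ¬, ∧ as connectives and everything else
as atoms; used to define propositional tautologies. -/
def beval {P n} (v : Formula P n → Bool) : Formula P n → Bool
  | .top => true
  | .atom p => v (.atom p)
  | .neg φ => !(beval v φ)
  | .and φ ψ => beval v φ && beval v ψ
  | .K G φ => v (.K G φ)
  | .Kh G φ => v (.Kh G φ)

/-- Instances of propositional tautologies. -/
def IsTaut {P n} (φ : Formula P n) : Prop := ∀ v, beval v φ = true

/-- The proof system SDKH. -/
inductive Provable {P : Type} {n : ℕ} : Formula P n → Prop
  | taut {φ} : IsTaut φ → Provable φ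
  | distK {G : Grp n} {φ ψ} :
      Provable (((Formula.K G φ).and (Formula.K G (φ.imp ψ))).imp (Formula.K G ψ))
  | axT {G : Grp n} {φ} : Provable ((Formula.K G φ).imp φ)
  | ax4 {G : Grp n} {φ} : Provable ((Formula.K G φ).imp (Formula.K G (Formula.K G φ)))
  | ax5 {G : Grp n} {φ} :
      Provable ((Formula.neg (Formula.K G φ)).imp (Formula.K G (Formula.neg (Formula.K G φ))))
  | axKMono {G H : Grp n} {φ} : G ⊆ H → Provable ((Formula.K G φ).imp (Formula.K H φ))
  | axKhMono {G H : Grp n} {φ} : G ⊆ H → Provable ((Formula.Kh G φ).imp (Formula.Kh H φ))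
  | axKtoKh {G : Grp n} {φ} : Provable ((Formula.K G φ).imp (Formula.Kh G φ))
  | axEmpKhtoK {φ} : Provable ((Formula.Kh ∅ φ).imp (Formula.K ∅ φ))
  | axKhtoKKh {G : Grp n} {φ} : Provable ((Formula.Kh G φ).imp (Formula.K G (Formula.Kh G φ)))
  | axEmpMono {G : Grp n} {φ ψ} :
      Provable ((Formula.K ∅ (φ.imp ψ)).imp (Formula.K ∅ ((Formula.Kh G φ).imp (Formula.Kh G ψ))))
  | axKhbot {G : Grp n} : Provable ((Formula.Kh G Formula.bot).imp Formula.bot)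
  | axKhtoKhK {G : Grp n} {φ} : Provable ((Formula.Kh G φ).imp (Formula.Kh G (Formula.K G φ)))
  | axKhKh {G : Grp n} {φ} : Provable ((Formula.Kh G (Formula.Kh G φ)).imp (Formula.Kh G φ))
  | mp {φ ψ} : Provable (φ.imp ψ) → Provable φ → Provable ψ
  | necK {G : Grp n} {φ} : Provable φ → Provable (Formula.K G φ)

/-- Conjunction of a finite list of formulas. -/
def conj {P n} (L : List (Formula P n)) : Formula P n := L.foldr Formula.and Formula.top

/-- SDKH-consistency of a set of formulas. -/
def Consistent {P n} (X : Set (Formula P n)) : Prop :=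
  ¬ ∃ L : List (Formula P n), (∀ φ ∈ L, φ ∈ X) ∧ Provable ((conj L).imp Formula.bot)

/-- Maximal consistent sets. -/
def MCS {P n} (X : Set (Formula P n)) : Prop :=
  Consistent X ∧ ∀ φ ∉ X, ¬ Consistent (insert φ X)

/-! ### The canonical model -/

/-- One step ⟨(φ,G),H⟩X of a mixed sequence. -/
structure CStep (P : Type) (n : ℕ) where
  fml : Formula P n
  G : Grp n
  H : Grp n
  X : Set (Formula P n)

instance {P n} : Inhabited (CStep P n) := ⟨⟨.top, ∅, ∅, ∅⟩⟩

/-- The conditions on a mixed sequence X_0⟨(φ_1,G_1),H_1⟩X_1⋯⟨(φ_n,G_n),H_n⟩X_n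
(the previous MCS being `X`). -/
def goodFrom {P n} : Set (Formula P n) → List (CStep P n) → Prop
  | _, [] => True
  | X, c :: rest =>
      MCS c.X ∧ c.G ≠ ∅ ∧ (Formula.Kh c.G c.fml) ∈ X ∧ (Formula.K c.G c.fml) ∈ c.X ∧
      (∀ ψ, (Formula.K c.H ψ) ∈ X → ψ ∈ c.X) ∧ goodFrom c.X rest

/-- The final MCS `ed(s)` of a mixed sequence. -/
def edOf {P n} (X0 : Set (Formula P n)) (l : List (CStep P n)) : Set (Formula P n) :=
  l.foldl (fun _ c => c.X) X0

/-- States of the canonical model: mixed sequences starting at X_0. -/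
def CState {P : Type} {n : ℕ} (X0 : Set (Formula P n)) := {l : List (CStep P n) // goodFrom X0 l}

/-- Canonical epistemic relation ∼^c_i. -/
def csim {P n} (X0 : Set (Formula P n)) (i : Fin n) (s t : CState X0) : Prop :=
  ∃ k : ℕ, k ≤ s.1.length ∧ k ≤ t.1.length ∧
    (∀ j < k, (s.1.getD j default).X = (t.1.getD j default).X ∧
              (s.1.getD j default).H = (t.1.getD j default).H) ∧
    (∀ j, k ≤ j → j < s.1.length → i ∈ (s.1.getD j default).H) ∧
    (∀ j, k ≤ j → j < t.1.length → i ∈ (t.1.getD j default).H)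

/-- Canonical atomic actions: pairs (φ, G). -/
abbrev CAct (P : Type) (n : ℕ) := Formula P n × Grp n

/-- Canonical atomic action sets A^c_G = {(φ,G) : φ ∈ DKH} for G ≠ ∅, A^c_∅ = ∅. -/
def cA {P : Type} {n : ℕ} (G : Grp n) : Set (CAct P n) := {a | a.2 = G ∧ G ≠ ∅}

/-- Canonical transition: s →_{(φ,G)} t iff t = s⟨(φ,G),G'⟩X for some G' and MCS X. -/
def ctr {P n} (X0 : Set (Formula P n)) (a : CAct P n) (s t : CState X0) : Prop :=
  ∃ (G' : Grp n) (Y : Set (Formula P n)), MCS Y ∧ t.1 = s.1 ++ [⟨a.1, a.2, G', Y⟩]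

theorem csim_equiv {P n} (X0 : Set (Formula P n)) (i : Fin n) : Equivalence (csim X0 i) := by
  constructor
  · intro s
    exact ⟨s.1.length, le_rfl, le_rfl, fun j _ => ⟨rfl, rfl⟩,
      fun j h1 h2 => absurd h2 (by omega), fun j h1 h2 => absurd h2 (by omega)⟩
  · rintro s t ⟨k, h1, h2, h3, h4, h5⟩
    exact ⟨k, h2, h1, fun j hj => ⟨(h3 j hj).1.symm, (h3 j hj).2.symm⟩, h5, h4⟩
  · rintro s t u ⟨k1, hk1s, hk1t, heq1, hs1, ht1⟩ ⟨k2, hk2t, hk2u, heq2, ht2, hu2⟩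
    refine ⟨min k1 k2, le_trans (min_le_left _ _) hk1s, le_trans (min_le_right _ _) hk2u,
      ?_, ?_, ?_⟩
    · intro j hj
      have e1 := heq1 j (lt_of_lt_of_le hj (min_le_left _ _))
      have e2 := heq2 j (lt_of_lt_of_le hj (min_le_right _ _))
      exact ⟨e1.1.trans e2.1, e1.2.trans e2.2⟩
    · intro j hj hjs
      by_cases h : k1 ≤ j
      · exact hs1 j h hjs
      · have hj2 : k2 ≤ j := by omega
        have hjt : j < t.1.length := by omega
        have := ht2 j hj2 hjt
        have e := (heq1 j (by omega)).2
        rw [e]; exact this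
    · intro j hj hju
      by_cases h : k2 ≤ j
      · exact hu2 j h hju
      · have hj1 : k1 ≤ j := by omega
        have hjt : j < t.1.length := by omega
        have := ht1 j hj1 hjt
        have e := (heq2 j (by omega)).2
        rw [← e]; exact this

theorem cA_empty {P : Type} {n : ℕ} : (cA (P := P) (n := n) ∅) = ∅ := by
  ext a; simp [cA]

theorem cA_disj {P : Type} {n : ℕ} (G H : Grp n) (h : G ⊂ H) :
    cA (P := P) (n := n) G ∩ cA H = ∅ := by
  ext a
  simp only [Set.mem_inter_iff, Set.mem_empty_iff_false, iff_false, cA, Set.mem_setOf_eq]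
  rintro ⟨⟨rfl, -⟩, ⟨h2, -⟩⟩
  exact h.ne h2

/-- The canonical model M^c(X_0). -/
def canonicalModel {P : Type} {n : ℕ} (X0 : Set (Formula P n)) : KhModel P n where
  State := CState X0
  Act := CAct P n
  sim := csim X0
  sim_equiv := csim_equiv X0
  A := cA
  A_empty := cA_empty
  A_disj := cA_disj
  tr := ctr X0
  V := fun p => {s : CState X0 | Formula.atom p ∈ edOf X0 s.1}


/-! ### Auxiliary lemmas for soundness -/

section SoundnessAux

variable {P : Type} {n : ℕ} {M : KhModel P n} {G : Grp n}

theorem gsim_refl (M : KhModel P n) (G : Grp n) (s : M.State) : gsim M G s s :=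
  fun i _ => (M.sim_equiv i).refl s

theorem gsim_symm {s t : M.State} (h : gsim M G s t) : gsim M G t s :=
  fun i hi => (M.sim_equiv i).symm (h i hi)

theorem gsim_trans {s t u : M.State} (h1 : gsim M G s t) (h2 : gsim M G t u) :
    gsim M G s u :=
  fun i hi => (M.sim_equiv i).trans (h1 i hi) (h2 i hi)

theorem gsim_mono {G H : Grp n} (hGH : G ⊆ H) {s t : M.State} (h : gsim M H s t) :
    gsim M G s t := fun i hi => h i (hGH hi)

theorem gsim_empty (M : KhModel P n) (s t : M.State) : gsim M ∅ s t :=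
  fun i hi => absurd hi (Finset.notMem_empty i)

/-- The everywhere-undefined strategy. -/
def noneStrategy (M : KhModel P n) (G : Grp n) : Strategy M G where
  act := fun _ => none
  uniform := fun _ _ _ => rfl
  mem_star := fun _ d h => nomatch h
  exec := fun _ d h => nomatch h

theorem stepRel_congr_left {σ : Strategy M G} {a b c : M.State} (hab : gsim M G a b)
    (h : stepRel σ b c) : stepRel σ a c := by
  obtain ⟨d, hd, u, v, hbu, hcv, htr⟩ := h
  exact ⟨d, (σ.uniform a b hab).trans hd, u, v, gsim_trans hab hbu, hcv, htr⟩

theorem stepRel_congr_right {σ : Strategy M G} {a b c : M.State} (h : stepRel σ a b)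
    (hbc : gsim M G b c) : stepRel σ a c := by
  obtain ⟨d, hd, u, v, hau, hbv, htr⟩ := h
  exact ⟨d, hd, u, v, hau, gsim_trans (gsim_symm hbc) hbv, htr⟩

/-- The set of states reachable (up to ∼_G) from `t0` via executions of `σ`. -/
def ExecTree {M : KhModel P n} {G : Grp n} (σ : Strategy M G) (t0 : M.State) :
    Set M.State :=
  {t | ∃ (m : ℕ) (f : ℕ → M.State), gsim M G t0 (f 0) ∧
    (∀ j < m, stepRel σ (f j) (f (j+1))) ∧ gsim M G (f m) t}

theorem ExecTree.self (σ : Strategy M G) (t0 : M.State) : t0 ∈ ExecTree σ t0 :=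
  ⟨0, fun _ => t0, gsim_refl M G t0, fun j hj => absurd hj (by omega), gsim_refl M G t0⟩

theorem ExecTree.gsimClosed {σ : Strategy M G} {t0 t u : M.State}
    (ht : t ∈ ExecTree σ t0) (htu : gsim M G t u) : u ∈ ExecTree σ t0 := by
  obtain ⟨m, f, h0, hs, hm⟩ := ht
  exact ⟨m, f, h0, hs, gsim_trans hm htu⟩

theorem ExecTree.step {σ : Strategy M G} {t0 t u : M.State}
    (ht : t ∈ ExecTree σ t0) (htu : stepRel σ t u) : u ∈ ExecTree σ t0 := by
  obtain ⟨m, f, h0, hs, hm⟩ := ht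
  refine ⟨m+1, fun k => if k ≤ m then f k else u, ?_, ?_, ?_⟩
  · simpa using h0
  · intro j hj
    by_cases hjm : j < m
    · simp only [if_pos (by omega : j ≤ m), if_pos (by omega : j+1 ≤ m)]
      exact hs j hjm
    · have hjm' : j = m := by omega
      subst hjm'
      simp only [if_pos le_rfl, if_neg (by omega : ¬ j+1 ≤ j)]
      exact stepRel_congr_left hm htu
  · simp only [if_neg (by omega : ¬ m+1 ≤ m)]
    exact gsim_refl M G u

theorem ExecTree.toLeaf {σ : Strategy M G} {t0 t : M.State} (ht : t ∈ ExecTree σ t0)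
    (hn : σ.act t = none) : t ∈ CELeaf σ t0 := by
  obtain ⟨m, f, h0, hs, hm⟩ := ht
  exact ⟨m, f, h0, hs, (σ.uniform (f m) t hm).trans hn, hm⟩

/-- An infinite execution starting anywhere in the execution tree of `σ` from `t0`
yields an infinite complete execution from `t0`. -/
theorem noInf_of_tree {σ : Strategy M G} {t0 t : M.State}
    (hni : ¬ InfiniteFrom σ t0) (ht : t ∈ ExecTree σ t0)
    (f : ℕ → M.State) (hf0 : gsim M G t (f 0))
    (hstep : ∀ j, stepRel σ (f j) (f (j+1))) : False := by
  obtain ⟨m, g, h0, hs, hm⟩ := ht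
  have hmf : gsim M G (g m) (f 0) := gsim_trans hm hf0
  apply hni
  refine ⟨fun k => if k < m then g k else f (k - m), ?_, ?_⟩
  · by_cases h : 0 < m
    · simpa [h] using h0
    · have hm0 : m = 0 := by omega
      subst hm0
      simpa using gsim_trans h0 hmf
  · intro k
    by_cases h1 : k + 1 < m
    · simp only [if_pos (by omega : k < m), if_pos h1]
      exact hs k (by omega)
    · by_cases h2 : k < m
      · have hkm : k + 1 = m := by omega
        simp only [if_pos h2, if_neg (by omega : ¬ k + 1 < m)]
        have e : k + 1 - m = 0 := by omega
        rw [e]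
        have := hs k h2
        rw [hkm] at this
        exact stepRel_congr_right this hmf
      · simp only [if_neg h2, if_neg (by omega : ¬ k + 1 < m)]
        have e : k + 1 - m = (k - m) + 1 := by omega
        rw [e]
        exact hstep (k - m)

/-- A strategy with no infinite execution from `s` has a reachable leaf. -/
theorem exists_mem_CELeaf (σ : Strategy M G) (s : M.State)
    (hni : ¬ InfiniteFrom σ s) : ∃ t, t ∈ CELeaf σ s := by
  by_contra h
  push_neg at h
  have hstep : ∀ t : {t // t ∈ ExecTree σ s},
      ∃ u : {t // t ∈ ExecTree σ s}, stepRel σ t.1 u.1 := by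
    rintro ⟨t, ht⟩
    cases heq : σ.act t with
    | none => exact absurd (ExecTree.toLeaf ht heq) (h t)
    | some d =>
      obtain ⟨v, hv⟩ := σ.exec t d heq t (gsim_refl M G t)
      have hst : stepRel σ t v := ⟨d, heq, t, v, gsim_refl M G t, gsim_refl M G v, hv⟩
      exact ⟨⟨v, ExecTree.step ht hst⟩, hst⟩
  choose F hF using hstep
  apply hni
  refine ⟨fun k => (F^[k] ⟨s, ExecTree.self σ s⟩).1, ?_, ?_⟩
  · simpa using gsim_refl M G s
  · intro j
    show stepRel σ (F^[j] ⟨s, ExecTree.self σ s⟩).1 (F^[j+1] ⟨s, ExecTree.self σ s⟩).1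
    rw [Function.iterate_succ_apply']
    exact hF _

theorem star_mono {Act : Type} {A : Grp n → Set Act} {G H : Grp n} (hGH : G ⊆ H)
    {d : DAct Act} (h : star A G d) : star A H d := by
  cases h with
  | base hsub ha => exact star.base (hsub.trans hGH) ha
  | joint hlen hpp hch hfa =>
    exact star.joint hlen ⟨hpp.1, hpp.2.1, fun B hB => (hpp.2.2 B hB).trans hGH⟩ hch hfa

theorem star_empty_elim {Act : Type} {A : Grp n → Set Act} (hA : A ∅ = ∅)
    {d : DAct Act} : ¬ star A ∅ d := by
  intro h
  cases h with
  | @base _ G' a hsub ha =>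
    rw [Finset.subset_empty.mp hsub, hA] at ha
    exact ha
  | @joint _ Gs ds hlen hpp hch hfa =>
    cases Gs with
    | nil => simp at hlen
    | cons B rest =>
      have hB := hpp.1 B List.mem_cons_self
      have hB2 : B ⊆ (∅ : Grp n) := hpp.2.2 B List.mem_cons_self
      exact hB (Finset.subset_empty.mp hB2)

/-- Regarding a strategy of `G` as a strategy of a supergroup `H`. -/
def liftStrategy {G H : Grp n} (hGH : G ⊆ H) (σ : Strategy M G) : Strategy M H where
  act := σ.act
  uniform := fun s t h => σ.uniform s t (gsim_mono hGH h)
  mem_star := fun s d h => star_mono hGH (σ.mem_star s d h)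
  exec := fun s d h t ht => σ.exec s d h t (gsim_mono hGH ht)

theorem stepRel_lift {G H : Grp n} (hGH : G ⊆ H) {σ : Strategy M G} {a b : M.State}
    (h : stepRel (liftStrategy hGH σ) a b) : stepRel σ a b := by
  obtain ⟨d, hd, u, v, hau, hbv, htr⟩ := h
  exact ⟨d, hd, u, v, gsim_mono hGH hau, gsim_mono hGH hbv, htr⟩

theorem CELeaf_congr {σ : Strategy M G} {s s' : M.State} (h : gsim M G s s') :
    CELeaf σ s = CELeaf σ s' := by
  ext t
  constructor <;> rintro ⟨m, f, h0, hs, hn, hm⟩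
  · exact ⟨m, f, gsim_trans (gsim_symm h) h0, hs, hn, hm⟩
  · exact ⟨m, f, gsim_trans h h0, hs, hn, hm⟩

theorem InfiniteFrom_congr {σ : Strategy M G} {s s' : M.State} (h : gsim M G s s') :
    InfiniteFrom σ s ↔ InfiniteFrom σ s' := by
  constructor <;> rintro ⟨f, h0, hs⟩
  · exact ⟨f, gsim_trans (gsim_symm h) h0, hs⟩
  · exact ⟨f, gsim_trans h h0, hs⟩

theorem CELeaf_gsimClosed {σ : Strategy M G} {s t u : M.State}
    (ht : t ∈ CELeaf σ s) (htu : gsim M G t u) : u ∈ CELeaf σ s := by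
  obtain ⟨m, f, h0, hs, hn, hm⟩ := ht
  exact ⟨m, f, h0, hs, hn, gsim_trans hm htu⟩

theorem sat_imp {s : M.State} {φ ψ : Formula P n} :
    Sat M s (φ.imp ψ) ↔ (Sat M s φ → Sat M s ψ) := by
  show ¬ (Sat M s φ ∧ ¬ Sat M s ψ) ↔ _
  tauto

theorem sat_and_iff {s : M.State} {φ ψ : Formula P n} :
    Sat M s (φ.and ψ) ↔ Sat M s φ ∧ Sat M s ψ := Iff.rfl

theorem sat_neg_iff {s : M.State} {φ : Formula P n} :
    Sat M s φ.neg ↔ ¬ Sat M s φ := Iff.rfl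

theorem sat_K_iff {s : M.State} {φ : Formula P n} :
    Sat M s (.K G φ) ↔ ∀ t, gsim M G s t → Sat M t φ := Iff.rfl

theorem sat_Kh_iff {s : M.State} {φ : Formula P n} :
    Sat M s (.Kh G φ) ↔ ∃ σ : Strategy M G,
      (∀ t ∈ CELeaf σ s, Sat M t φ) ∧ ¬ InfiniteFrom σ s := Iff.rfl

theorem sat_of_taut (M : KhModel P n) (s : M.State) {φ : Formula P n}
    (h : IsTaut φ) : Sat M s φ := by
  classical
  have key : ∀ ψ : Formula P n,
      beval (fun χ => decide (Sat M s χ)) ψ = true ↔ Sat M s ψ := by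
    intro ψ
    induction ψ with
    | top => simp [beval, Sat]
    | atom p => simp [beval]
    | neg χ ih => simp [beval, Sat, ← ih]
    | and χ1 χ2 ih1 ih2 => simp [beval, Sat, ih1, ih2]
    | K G χ ih => simp [beval]
    | Kh G χ ih => simp [beval]
  exact (key φ).mp (h _)

/-- Semantic validity of the axiom `Kh_G Kh_G φ → Kh_G φ`. -/
theorem sat_KhKh {φ : Formula P n} {s : M.State}
    (hs : Sat M s (.Kh G (.Kh G φ))) : Sat M s (.Kh G φ) := by
  classical
  obtain ⟨σ, hleaf, hinf⟩ := hs
  -- choose a witnessing strategy for each leaf of σ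
  have hchoice : ∀ t : M.State, ∃ σt : Strategy M G,
      t ∈ CELeaf σ s → (∀ u ∈ CELeaf σt t, Sat M u φ) ∧ ¬ InfiniteFrom σt t := by
    intro t
    by_cases ht : t ∈ CELeaf σ s
    · obtain ⟨σt, h1, h2⟩ := hleaf t ht
      exact ⟨σt, fun _ => ⟨h1, h2⟩⟩
    · exact ⟨noneStrategy M G, fun h => absurd h ht⟩
  choose ξ hξ using hchoice
  -- a well order on states, used to disambiguate overlapping execution trees
  have hwf : WellFounded (WellOrderingRel : M.State → M.State → Prop) :=
    IsWellFounded.wf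
  let S : M.State → Set M.State :=
    fun u => {t | t ∈ CELeaf σ s ∧ u ∈ ExecTree (ξ t) t}
  let pick : Set M.State → Strategy M G :=
    fun X => if h : X.Nonempty then ξ (hwf.min X h) else σ
  have hS_congr : ∀ u u', gsim M G u u' → S u = S u' := by
    intro u u' h
    ext t
    simp only [S, Set.mem_setOf_eq]
    exact ⟨fun ⟨h1, h2⟩ => ⟨h1, ExecTree.gsimClosed h2 h⟩,
      fun ⟨h1, h2⟩ => ⟨h1, ExecTree.gsimClosed h2 (gsim_symm h)⟩⟩
  let τ : Strategy M G :=
    { act := fun u => (pick (S u)).act u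
      uniform := fun u u' h => by
        show (pick (S u)).act u = (pick (S u')).act u'
        rw [hS_congr u u' h]
        exact (pick (S u')).uniform u u' h
      mem_star := fun u d h => (pick (S u)).mem_star u d h
      exec := fun u d h t ht => (pick (S u)).exec u d h t ht }
  have hpick_pos : ∀ (u : M.State) (h : (S u).Nonempty),
      pick (S u) = ξ (hwf.min (S u) h) := by
    intro u h
    simp only [pick, dif_pos h]
  have hpick_neg : ∀ u : M.State, ¬ (S u).Nonempty → pick (S u) = σ :=
    fun u h => dif_neg h
  -- a τ-step out of a state in some tree stays in the least tree
  have hprop : ∀ u v (h : (S u).Nonempty), stepRel τ u v → hwf.min (S u) h ∈ S v := by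
    intro u v h hst
    have htS : hwf.min (S u) h ∈ S u := hwf.min_mem _ h
    obtain ⟨d, hd, u', v', h1, h2, h3⟩ := hst
    have hd' : (pick (S u)).act u = some d := hd
    rw [hpick_pos u h] at hd'
    have hstx : stepRel (ξ (hwf.min (S u) h)) u v := ⟨d, hd', u', v', h1, h2, h3⟩
    exact ⟨htS.1, ExecTree.step htS.2 hstx⟩
  have hterm : ¬ InfiniteFrom τ s := by
    rintro ⟨f, hf0, hstep⟩
    by_cases hc : ∃ j, (S (f j)).Nonempty
    · obtain ⟨j0, hj0⟩ := hc
      have hne : ∀ k, (S (f (j0 + k))).Nonempty := by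
        intro k
        induction k with
        | zero => exact hj0
        | succ k ih => exact ⟨_, hprop (f (j0+k)) (f (j0+k+1)) ih (hstep (j0+k))⟩
      let t : ℕ → M.State := fun k => hwf.min (S (f (j0 + k))) (hne k)
      have htmem : ∀ k, t k ∈ S (f (j0 + k)) := fun k => hwf.min_mem _ _
      have hstepk : ∀ k, stepRel (ξ (t k)) (f (j0+k)) (f (j0+k+1)) := by
        intro k
        obtain ⟨d, hd, u', v', h1, h2, h3⟩ := hstep (j0+k)
        have hd' : (pick (S (f (j0+k)))).act (f (j0+k)) = some d := hd
        rw [hpick_pos _ (hne k)] at hd'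
        exact ⟨d, hd', u', v', h1, h2, h3⟩
      have hdec : ∀ k, t (k+1) = t k ∨ WellOrderingRel (t (k+1)) (t k) := by
        intro k
        have h1 : t k ∈ S (f (j0 + (k+1))) :=
          hprop (f (j0+k)) (f (j0+k+1)) (hne k) (hstep (j0+k))
        have h2 : ¬ WellOrderingRel (t k) (t (k+1)) :=
          hwf.not_lt_min _ h1
        rcases trichotomous_of WellOrderingRel (t (k+1)) (t k) with h | h | h
        · exact Or.inr h
        · exact Or.inl h
        · exact absurd h h2
      -- the sequence of least trees stabilizes
      have hrange : {x | ∃ k, t k = x}.Nonempty := ⟨t 0, 0, rfl⟩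
      obtain ⟨k1, hk1⟩ := hwf.min_mem {x | ∃ k, t k = x} hrange
      set m0 := hwf.min {x | ∃ k, t k = x} hrange with hm0
      have hstab : ∀ d, t (k1 + d) = m0 := by
        intro d
        induction d with
        | zero => exact hk1
        | succ d ih =>
          show t (k1 + d + 1) = m0
          rcases hdec (k1 + d) with h | h
          · rw [h, ih]
          · rw [ih] at h
            exact absurd h (hwf.not_lt_min {x | ∃ k, t k = x} ⟨k1 + d + 1, rfl⟩)
      have hm0S : m0 ∈ S (f (j0 + k1)) := hk1 ▸ htmem k1
      have hm0L : m0 ∈ CELeaf σ s := hm0S.1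
      refine noInf_of_tree (hξ m0 hm0L).2 hm0S.2 (fun k => f (j0 + k1 + k))
        (gsim_refl M G _) ?_
      intro k
      have h := hstepk (k1 + k)
      rw [hstab k] at h
      rw [← Nat.add_assoc] at h
      exact h
    · rw [not_exists] at hc
      apply hinf
      refine ⟨f, hf0, fun j => ?_⟩
      obtain ⟨d, hd, u', v', h1, h2, h3⟩ := hstep j
      have hd' : (pick (S (f j))).act (f j) = some d := hd
      rw [hpick_neg _ (hc j)] at hd'
      exact ⟨d, hd', u', v', h1, h2, h3⟩
  refine ⟨τ, ?_, hterm⟩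
  rintro t ⟨m, f, hf0, hstep, hnone, hmt⟩
  by_cases h : (S (f m)).Nonempty
  · have htS := hwf.min_mem (S (f m)) h
    have hnone' : (ξ (hwf.min (S (f m)) h)).act (f m) = none := by
      have h0 : (pick (S (f m))).act (f m) = none := hnone
      rwa [hpick_pos _ h] at h0
    have hfm : f m ∈ CELeaf (ξ (hwf.min (S (f m)) h)) (hwf.min (S (f m)) h) :=
      ExecTree.toLeaf htS.2 hnone'
    exact (hξ _ htS.1).1 t (CELeaf_gsimClosed hfm hmt)
  · have up : ∀ j, j < m → (S (f j)).Nonempty → (S (f (j+1))).Nonempty := by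
      intro j hj hne
      exact ⟨_, hprop (f j) (f (j+1)) hne (hstep j hj)⟩
    have down : ∀ k, k ≤ m → ¬ (S (f (m - k))).Nonempty := by
      intro k
      induction k with
      | zero => intro _; simpa using h
      | succ k ih =>
        intro hk hne
        have h1 : m - (k+1) < m := by omega
        have h2 := up _ h1 hne
        have e : m - (k+1) + 1 = m - k := by omega
        rw [e] at h2
        exact ih (by omega) h2
    have hallneg : ∀ j, j ≤ m → ¬ (S (f j)).Nonempty := by
      intro j hj
      have hd := down (m - j) (by omega)
      have e : m - (m - j) = j := by omega
      rwa [e] at hd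
    have hsigsteps : ∀ j, j < m → stepRel σ (f j) (f (j+1)) := by
      intro j hj
      obtain ⟨d, hd, u', v', h1, h2, h3⟩ := hstep j hj
      have hd' : (pick (S (f j))).act (f j) = some d := hd
      rw [hpick_neg _ (hallneg j (by omega))] at hd'
      exact ⟨d, hd', u', v', h1, h2, h3⟩
    have hσnone : σ.act (f m) = none := by
      have h0 : (pick (S (f m))).act (f m) = none := hnone
      rwa [hpick_neg _ h] at h0
    have hfmL : f m ∈ CELeaf σ s := ⟨m, f, hf0, hsigsteps, hσnone, gsim_refl M G (f m)⟩
    exact absurd ⟨f m, hfmL, ExecTree.self (ξ (f m)) (f m)⟩ h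

end SoundnessAux

/-- Soundness of SDKH: provable formulas are valid. -/
theorem soundness {P : Type} [Countable P] {n : ℕ}
    (φ : Formula P n) (h : Provable φ) :
    ∀ (M : KhModel P n) (s : M.State), Sat M s φ := by
  induction h with
  | @taut φ ht =>
    intro M s
    exact sat_of_taut M s ht
  | @distK G φ ψ =>
    intro M s
    rw [sat_imp]
    rintro ⟨h1, h2⟩
    intro t ht
    have h3 := h2 t ht
    rw [sat_imp] at h3
    exact h3 (h1 t ht)
  | @axT G φ =>
    intro M s
    rw [sat_imp]
    intro h
    exact h s (gsim_refl M G s)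
  | @ax4 G φ =>
    intro M s
    rw [sat_imp]
    intro h t ht u hu
    exact h u (gsim_trans ht hu)
  | @ax5 G φ =>
    intro M s
    rw [sat_imp]
    intro h t ht
    rw [sat_neg_iff, sat_K_iff] at h ⊢
    intro hall
    apply h
    intro u hu
    exact hall u (gsim_trans (gsim_symm ht) hu)
  | @axKMono G H φ hGH =>
    intro M s
    rw [sat_imp]
    intro h t ht
    exact h t (gsim_mono hGH ht)
  | @axKhMono G H φ hGH =>
    intro M s
    rw [sat_imp]
    rintro ⟨σ, hl, hi⟩
    refine ⟨liftStrategy hGH σ, ?_, ?_⟩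
    · rintro t ⟨m, f, h0, hs, hn, hm⟩
      exact hl t ⟨m, f, gsim_mono hGH h0, fun j hj => stepRel_lift hGH (hs j hj), hn,
        gsim_mono hGH hm⟩
    · rintro ⟨f, h0, hs⟩
      exact hi ⟨f, gsim_mono hGH h0, fun j => stepRel_lift hGH (hs j)⟩
  | @axKtoKh G φ =>
    intro M s
    rw [sat_imp]
    intro h
    refine ⟨noneStrategy M G, ?_, ?_⟩
    · rintro t ⟨m, f, h0, hs, hn, hm⟩
      apply h
      cases m with
      | zero => exact gsim_trans h0 hm
      | succ k =>
        obtain ⟨d, hd, -⟩ := hs 0 (Nat.succ_pos k)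
        simp [noneStrategy] at hd
    · rintro ⟨f, h0, hs⟩
      obtain ⟨d, hd, -⟩ := hs 0
      simp [noneStrategy] at hd
  | @axEmpKhtoK φ =>
    intro M s
    rw [sat_imp]
    rintro ⟨σ, hl, hi⟩
    intro t ht
    have hnone : ∀ u, σ.act u = none := by
      intro u
      cases heq : σ.act u with
      | none => rfl
      | some d => exact absurd (σ.mem_star u d heq) (star_empty_elim M.A_empty)
    exact hl t ⟨0, fun _ => s, gsim_empty M s s, fun j hj => absurd hj (by omega),
      hnone s, gsim_empty M s t⟩
  | @axKhtoKKh G φ =>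
    intro M s
    rw [sat_imp]
    rintro ⟨σ, hl, hi⟩
    intro t ht
    refine ⟨σ, ?_, ?_⟩
    · intro u hu
      rw [← CELeaf_congr ht] at hu
      exact hl u hu
    · intro hinf'
      exact hi ((InfiniteFrom_congr ht).mpr hinf')
  | @axEmpMono G φ ψ =>
    intro M s
    rw [sat_imp]
    intro h t ht
    rw [sat_imp]
    rintro ⟨σ, hl, hi⟩
    refine ⟨σ, ?_, hi⟩
    intro u hu
    have h2 := h u (gsim_empty M s u)
    rw [sat_imp] at h2
    exact h2 (hl u hu)
  | @axKhbot G =>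
    intro M s
    rw [sat_imp]
    rintro ⟨σ, hl, hi⟩
    obtain ⟨t, ht⟩ := exists_mem_CELeaf σ s hi
    exact absurd (trivial : Sat M t Formula.top) (hl t ht)
  | @axKhtoKhK G φ =>
    intro M s
    rw [sat_imp]
    rintro ⟨σ, hl, hi⟩
    refine ⟨σ, ?_, hi⟩
    intro t ht u hu
    exact hl u (CELeaf_gsimClosed ht hu)
  | @axKhKh G φ =>
    intro M s
    rw [sat_imp]
    exact sat_KhKh
  | @mp φ ψ h1 h2 ih1 ih2 =>
    intro M s
    have h3 := ih1 M s
    rw [sat_imp] at h3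
    exact h3 (ih2 M s)
  | @necK G φ h ih =>
    intro M s t ht
    exact ih M t

end DKH
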